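/- Let d > b and a < c (dominant-strategy game with action 2 dominant), and let x be a solution of the uncontrolled replicator equation with x(0) ∈ [0,1). Then x(t) → 0 as t → ∞. -/

import Mathlib

open Set Filter

/-- Grönwall-type lemma: if `|g'| ≤ K * |g|` on `[t0, t1]` and `g t0 = 0`, then `g t1 = 0`. -/
lemma gronwall_zero {g g' : ℝ → ℝ} {t0 t1 K : ℝ} (h01 : t0 ≤ t1)
    (hd : ∀ t ∈ Set.Icc t0 t1, HasDerivAt g (g' t) t)
    (hb : ∀ t ∈ Set.Icc t0 t1, |g' t| ≤ K * |g t|)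
    (h0 : g t0 = 0) : g t1 = 0 := by
  have hcont : ContinuousOn g (Set.Icc t0 t1) :=
    fun t ht => (hd t ht).continuousAt.continuousWithinAt
  have H := norm_le_gronwallBound_of_norm_deriv_right_le (f := g) (f' := g')
    (δ := 0) (K := K) (ε := 0) hcont
    (fun t ht => (hd t (Set.Ico_subset_Icc_self ht)).hasDerivWithinAt)
    (by simp [h0])
    (fun t ht => by
      simpa [Real.norm_eq_abs] using hb t (Set.Ico_subset_Icc_self ht))
  have h := H t1 (Set.right_mem_Icc.2 h01)
  rw [gronwallBound_ε0_δ0] at h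
  exact norm_le_zero_iff.1 h

/-- If `x` solves `ẋ = F t` on `[0, t1]` with `|F t| ≤ K |x t - e|`, starts at or below `e`,
it cannot be above `e` at time `t1`. -/
lemma no_escape {x F : ℝ → ℝ} {t1 K e : ℝ} (h0t : (0:ℝ) ≤ t1)
    (hd : ∀ t ∈ Set.Icc (0:ℝ) t1, HasDerivAt x (F t) t)
    (hK : ∀ t ∈ Set.Icc (0:ℝ) t1, |F t| ≤ K * |x t - e|)
    (h0 : x 0 ≤ e) (h1 : e < x t1) : False := by
  have hcont : ContinuousOn x (Set.Icc 0 t1) :=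
    fun t ht => (hd t ht).continuousAt.continuousWithinAt
  set S : Set ℝ := {t ∈ Set.Icc (0:ℝ) t1 | x t ≤ e} with hSdef
  have hSne : S.Nonempty := ⟨0, ⟨Set.left_mem_Icc.2 h0t, h0⟩⟩
  have hSbdd : BddAbove S := ⟨t1, fun t ht => ht.1.2⟩
  have hSclosed : IsClosed S := by
    have hEq : S = Set.Icc 0 t1 ∩ x ⁻¹' Set.Iic e := rfl
    rw [hEq]
    exact hcont.preimage_isClosed_of_isClosed isClosed_Icc isClosed_Iic
  set t0 := sSup S with ht0def
  have ht0S : t0 ∈ S := hSclosed.csSup_mem hSne hSbdd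
  have ht0mem : t0 ∈ Set.Icc (0:ℝ) t1 := ht0S.1
  have ht0lt : t0 < t1 :=
    lt_of_le_of_ne ht0mem.2 fun h => absurd (h ▸ ht0S.2) (not_le.2 h1)
  have hgt : ∀ t ∈ Set.Ioc t0 t1, e < x t := by
    intro t ht
    by_contra h
    push_neg at h
    have htS : t ∈ S := ⟨⟨le_trans ht0mem.1 ht.1.le, ht.2⟩, h⟩
    exact absurd (le_csSup hSbdd htS) (not_le.2 ht.1)
  have hxt0 : x t0 = e := by
    refine le_antisymm ht0S.2 ?_
    have htend : Filter.Tendsto x (nhdsWithin t0 (Set.Ioi t0)) (nhds (x t0)) :=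
      ((hd t0 ht0mem).continuousAt.tendsto).mono_left nhdsWithin_le_nhds
    refine ge_of_tendsto htend ?_
    filter_upwards [Ioc_mem_nhdsGT_of_mem ⟨le_refl t0, ht0lt⟩] with t ht
    exact (hgt t ht).le
  have hz : x t1 - e = 0 := by
    have := gronwall_zero (g := fun t => x t - e) (g' := F) (t0 := t0) (t1 := t1) (K := K)
      ht0mem.2
      (fun t ht => ((hd t ⟨le_trans ht0mem.1 ht.1, ht.2⟩)).sub_const e)
      (fun t ht => hK t ⟨le_trans ht0mem.1 ht.1, ht.2⟩)
      (by simp [hxt0])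
    simpa using this
  linarith

/-- `x` is a solution of the uncontrolled replicator equation
`ẋ = x(1−x)((a+d−b−c)x + b − d)` on `[0,∞)`. -/
def IsReplicatorSolution (a b c d : ℝ) (x : ℝ → ℝ) : Prop :=
  ∀ t : ℝ, 0 ≤ t →
    HasDerivAt x (x t * (1 - x t) * ((a + d - b - c) * x t + (b - d))) t

/-- In a dominant-strategy game with action 2 dominant (`d > b`, `a < c`), any solution
of the uncontrolled replicator equation with `x(0) ∈ [0,1)` converges to `0`. -/
theorem replicator_dominant (a b c d : ℝ) (hdb : d > b) (hac : a < c)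
    (x : ℝ → ℝ) (hsol : IsReplicatorSolution a b c d x)
    (hx0 : x 0 ∈ Set.Ico (0 : ℝ) 1) :
    Filter.Tendsto x Filter.atTop (nhds 0) := by
  obtain ⟨hx00, hx01⟩ := hx0
  set α : ℝ := a + d - b - c with hα
  set β : ℝ := b - d with hβ
  set F : ℝ → ℝ := fun t => x t * (1 - x t) * (α * x t + β) with hFdef
  have hsol' : ∀ t : ℝ, 0 ≤ t → HasDerivAt x (F t) t := hsol
  have habs : ∀ y B : ℝ, |y| ≤ B → |α * y + β| ≤ |α| * B + |β| := by
    intro y B hy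
    calc |α * y + β| ≤ |α * y| + |β| := abs_add_le _ _
      _ = |α| * |y| + |β| := by rw [abs_mul]
      _ ≤ |α| * B + |β| := by nlinarith [abs_nonneg α, abs_nonneg y]
  -- Step 1: forward invariance of [0,1]
  have hinv : ∀ t : ℝ, 0 ≤ t → x t ∈ Set.Icc (0:ℝ) 1 := by
    intro t1 ht1
    by_contra hmem
    rw [Set.mem_Icc] at hmem
    push_neg at hmem
    have hcont : ContinuousOn x (Set.Icc 0 t1) :=
      fun t ht => (hsol' t ht.1).continuousAt.continuousWithinAt
    obtain ⟨B, hB⟩ := (isCompact_Icc).exists_bound_of_continuousOn hcont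
    have hB' : ∀ t ∈ Set.Icc (0:ℝ) t1, |x t| ≤ B := by
      intro t ht; simpa [Real.norm_eq_abs] using hB t ht
    have hB0 : 0 ≤ B := le_trans (abs_nonneg _) (hB' 0 (Set.left_mem_Icc.2 ht1))
    set K : ℝ := (1 + B) * (|α| * B + |β|) with hK
    have hMnn : (0:ℝ) ≤ |α| * B + |β| := by positivity
    have hP : ∀ t ∈ Set.Icc (0:ℝ) t1, |x t * (α * x t + β)| ≤ K := by
      intro t ht
      have hxb := hB' t ht
      rw [abs_mul, hK]
      have h1 : |x t| ≤ 1 + B := le_trans hxb (by linarith)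
      exact mul_le_mul h1 (habs _ _ hxb) (abs_nonneg _) (by linarith)
    have hQ : ∀ t ∈ Set.Icc (0:ℝ) t1, |(1 - x t) * (α * x t + β)| ≤ K := by
      intro t ht
      have hxb := hB' t ht
      obtain ⟨hl, hr⟩ := abs_le.1 hxb
      rw [abs_mul, hK]
      have h1 : |1 - x t| ≤ 1 + B := abs_le.2 ⟨by linarith, by linarith⟩
      exact mul_le_mul h1 (habs _ _ hxb) (abs_nonneg _) (by linarith)
    rcases lt_or_ge (x t1) 0 with hneg | hnn
    · -- lower escape: apply no_escape to -x
      refine no_escape (x := fun t => - x t) (F := fun t => - F t) (e := 0) (K := K)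
        ht1 (fun t ht => (hsol' t ht.1).neg) ?_ (by simpa using hx00) (by simpa using hneg)
      intro t ht
      have hFeq : |F t| = |x t| * |(1 - x t) * (α * x t + β)| := by
        rw [hFdef]
        simp only []
        rw [show x t * (1 - x t) * (α * x t + β) = x t * ((1 - x t) * (α * x t + β)) by ring,
          abs_mul]
      have : |F t| ≤ K * |x t| := by
        rw [hFeq, mul_comm]
        exact mul_le_mul_of_nonneg_right (hQ t ht) (abs_nonneg _)
      simpa using this
    · -- upper escape
      have h1' : 1 < x t1 := hmem hnn
      refine no_escape (x := x) (F := F) (e := 1) (K := K)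
        ht1 (fun t ht => hsol' t ht.1) ?_ hx01.le h1'
      intro t ht
      have hFeq : |F t| = |x t - 1| * |x t * (α * x t + β)| := by
        rw [hFdef]
        simp only []
        rw [show x t * (1 - x t) * (α * x t + β) = (x t - 1) * -(x t * (α * x t + β)) by ring,
          abs_mul, abs_neg]
      rw [hFeq, mul_comm]
      exact mul_le_mul_of_nonneg_right (hP t ht) (abs_nonneg _)
  -- key sign fact: α y + β ≤ -m on [0,1]
  set m : ℝ := min (c - a) (d - b) with hm
  have hm0 : 0 < m := lt_min (by linarith) (by linarith)
  have hsign : ∀ y : ℝ, 0 ≤ y → y ≤ 1 → α * y + β ≤ -m := by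
    intro y hy0 hy1
    have h1 : m ≤ c - a := min_le_left _ _
    have h2 : m ≤ d - b := min_le_right _ _
    have h3 : 0 ≤ y * (c - a - m) := mul_nonneg hy0 (by linarith)
    have h4 : 0 ≤ (1 - y) * (d - b - m) := mul_nonneg (by linarith) (by linarith)
    rw [hα, hβ]; nlinarith
  -- Step 2: x is antitone on [0,∞)
  have hFnp : ∀ t : ℝ, 0 ≤ t → F t ≤ 0 := by
    intro t ht
    obtain ⟨h0, h1⟩ := hinv t ht
    have := hsign (x t) h0 h1
    have hnn : 0 ≤ x t * (1 - x t) := mul_nonneg h0 (by linarith)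
    rw [hFdef]
    exact mul_nonpos_of_nonneg_of_nonpos hnn (by linarith)
  have hanti : AntitoneOn x (Set.Ici (0:ℝ)) := by
    apply antitoneOn_of_deriv_nonpos (convex_Ici 0)
    · exact fun t ht => (hsol' t ht).continuousAt.continuousWithinAt
    · rw [interior_Ici]
      exact fun t ht => ((hsol' t (le_of_lt ht)).differentiableAt).differentiableWithinAt
    · rw [interior_Ici]
      intro t ht
      rw [(hsol' t ht.le).deriv]
      exact hFnp t ht.le
  -- Step 3: the limit exists
  set g : ℝ → ℝ := fun t => x (t ⊔ 0) with hgdef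
  have hganti : Antitone g := by
    intro s t hst
    exact hanti (Set.mem_Ici.2 (le_max_right s 0)) (Set.mem_Ici.2 (le_max_right t 0))
      (max_le_max hst le_rfl)
  have hgbdd : BddBelow (Set.range g) := by
    refine ⟨0, ?_⟩
    rintro _ ⟨t, rfl⟩
    exact (hinv _ (le_max_right t 0)).1
  have hlim := tendsto_atTop_ciInf hganti hgbdd
  set L : ℝ := ⨅ t, g t with hLdef
  have hgx : g =ᶠ[atTop] x := by
    filter_upwards [eventually_ge_atTop (0:ℝ)] with t ht
    simp [hgdef, max_eq_left ht]
  have hxlim : Filter.Tendsto x Filter.atTop (nhds L) := hlim.congr' hgx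
  have hLx : ∀ t : ℝ, 0 ≤ t → L ≤ x t := by
    intro t ht
    have h2 : L ≤ x (t ⊔ 0) := by simpa using ciInf_le hgbdd t
    rwa [max_eq_left ht] at h2
  have hL0 : 0 ≤ L := le_ciInf fun t => (hinv _ (le_max_right t 0)).1
  -- Step 4: L = 0
  suffices hL : L = 0 by rwa [hL] at hxlim
  by_contra hLne
  have hLpos : 0 < L := lt_of_le_of_ne hL0 (Ne.symm hLne)
  set ε : ℝ := L * (1 - x 0) * m with hε
  have hεpos : 0 < ε := by
    apply mul_pos (mul_pos hLpos (by linarith)) hm0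
  have hFle : ∀ t : ℝ, 0 ≤ t → F t ≤ -ε := by
    intro t ht
    obtain ⟨h0, h1⟩ := hinv t ht
    have hxle : x t ≤ x 0 := hanti (Set.mem_Ici.2 le_rfl) (Set.mem_Ici.2 ht) ht
    have hxge : L ≤ x t := hLx t ht
    have hmul : L * (1 - x 0) ≤ x t * (1 - x t) :=
      mul_le_mul hxge (by linarith) (by linarith) (by linarith)
    have hs := hsign (x t) h0 h1
    have Pnn : 0 ≤ x t * (1 - x t) := mul_nonneg h0 (by linarith)
    show x t * (1 - x t) * (α * x t + β) ≤ -(L * (1 - x 0) * m)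
    calc x t * (1 - x t) * (α * x t + β) ≤ x t * (1 - x t) * (-m) :=
          mul_le_mul_of_nonneg_left hs Pnn
      _ = -(x t * (1 - x t) * m) := by ring
      _ ≤ -(L * (1 - x 0) * m) := neg_le_neg (mul_le_mul_of_nonneg_right hmul hm0.le)
  -- x t + ε t is antitone on [0,∞)
  have hhanti : AntitoneOn (fun t => x t + ε * t) (Set.Ici (0:ℝ)) := by
    have hder : ∀ t : ℝ, 0 ≤ t → HasDerivAt (fun s => x s + ε * s) (F t + ε) t := by
      intro t ht
      exact ((hsol' t ht).add ((hasDerivAt_id' t).const_mul ε)).congr_deriv (by ring)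
    apply antitoneOn_of_deriv_nonpos (convex_Ici 0)
    · exact fun t ht => (hder t ht).continuousAt.continuousWithinAt
    · rw [interior_Ici]
      exact fun t ht => ((hder t (le_of_lt ht)).differentiableAt).differentiableWithinAt
    · rw [interior_Ici]
      intro t ht
      rw [(hder t ht.le).deriv]
      linarith [hFle t ht.le]
  set T : ℝ := (x 0 + 1) / ε with hT
  have hT0 : 0 ≤ T := div_nonneg (by linarith) hεpos.le
  have := hhanti (Set.mem_Ici.2 le_rfl) (Set.mem_Ici.2 hT0) hT0
  simp only [mul_zero, add_zero] at this
  have hεT : ε * T = x 0 + 1 := by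
    rw [hT]; field_simp
  have := hLx T hT0
  linarith
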